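/- Let A and B be linear subspaces of ℝ^n, and set Ã = A + (A^⊥ ∩ B^⊥) and B̃ = B + (A^⊥ ∩ B^⊥). Then for every x ∈ ℝ^n, R_Ã R_B̃ x = R_A R_B x; consequently the Douglas–Rachford operators coincide: ½(R_Ã R_B̃ + Id) x = ½(R_A R_B + Id) x for all x ∈ ℝ^n. -/

import Mathlib

/-- The reflection across a subspace `K` of Euclidean space, `R_K = 2 P_K - Id`. -/
noncomputable def reflS {n : ℕ} (K : Submodule ℝ (EuclideanSpace ℝ (Fin n)))
    (x : EuclideanSpace ℝ (Fin n)) : EuclideanSpace ℝ (Fin n) :=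
  (2:ℝ) • (K.orthogonalProjectionOnto x : EuclideanSpace ℝ (Fin n)) - x

private lemma proj_sup {n : ℕ} (K L : Submodule ℝ (EuclideanSpace ℝ (Fin n)))
    (h : L ≤ Kᗮ) (x : EuclideanSpace ℝ (Fin n)) :
    (Submodule.orthogonalProjectionOnto (K ⊔ L) x : EuclideanSpace ℝ (Fin n)) =
      (Submodule.orthogonalProjectionOnto K x : EuclideanSpace ℝ (Fin n)) +
      (Submodule.orthogonalProjectionOnto L x : EuclideanSpace ℝ (Fin n)) := by
  have h' : K ≤ Lᗮ := (Submodule.isOrtho_iff_le.mpr h).symm.le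
  apply Submodule.eq_starProjection_of_mem_orthogonal
  · exact Submodule.add_mem_sup (Submodule.orthogonalProjectionOnto K x).2 (Submodule.orthogonalProjectionOnto L x).2
  · rw [← Submodule.inf_orthogonal]
    constructor
    · have h1 : x - (Submodule.orthogonalProjectionOnto K x : EuclideanSpace ℝ (Fin n)) ∈ Kᗮ :=
        Submodule.sub_starProjection_mem_orthogonal x
      have h2 : (Submodule.orthogonalProjectionOnto L x : EuclideanSpace ℝ (Fin n)) ∈ Kᗮ :=
        h (Submodule.orthogonalProjectionOnto L x).2
      have := Kᗮ.sub_mem h1 h2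
      convert this using 1
      abel_nf
      exact Iff.rfl
    · have h1 : x - (Submodule.orthogonalProjectionOnto L x : EuclideanSpace ℝ (Fin n)) ∈ Lᗮ :=
        Submodule.sub_starProjection_mem_orthogonal x
      have h2 : (Submodule.orthogonalProjectionOnto K x : EuclideanSpace ℝ (Fin n)) ∈ Lᗮ :=
        h' (Submodule.orthogonalProjectionOnto K x).2
      have := Lᗮ.sub_mem h1 h2
      convert this using 1
      abel_nf
      exact Iff.rfl

/-- For linear subspaces `A, B` of ℝⁿ with enlargements `Ã = A + (A^⊥ ∩ B^⊥)` and
`B̃ = B + (A^⊥ ∩ B^⊥)`: `R_Ã R_B̃ = R_A R_B` everywhere, and hence the Douglas–Rachford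
operators `½(R_Ã R_B̃ + Id)` and `½(R_A R_B + Id)` coincide. -/
theorem stmt16 {n : ℕ} (A B : Submodule ℝ (EuclideanSpace ℝ (Fin n))) :
    ∀ x : EuclideanSpace ℝ (Fin n),
      reflS (A ⊔ (Aᗮ ⊓ Bᗮ)) (reflS (B ⊔ (Aᗮ ⊓ Bᗮ)) x) = reflS A (reflS B x) ∧
      (1/2 : ℝ) • (reflS (A ⊔ (Aᗮ ⊓ Bᗮ)) (reflS (B ⊔ (Aᗮ ⊓ Bᗮ)) x) + x) =
        (1/2 : ℝ) • (reflS A (reflS B x) + x) := by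
  intro x
  set C := Aᗮ ⊓ Bᗮ with hC
  have hCA : C ≤ Aᗮ := inf_le_left
  have hCB : C ≤ Bᗮ := inf_le_right
  have key : reflS (A ⊔ C) (reflS (B ⊔ C) x) = reflS A (reflS B x) := by
    have h1 := proj_sup B C hCB x
    have h2 := proj_sup A C hCA (reflS (B ⊔ C) x)
    set pB := (Submodule.orthogonalProjectionOnto B x : EuclideanSpace ℝ (Fin n)) with hpBdef
    set pC := (Submodule.orthogonalProjectionOnto C x : EuclideanSpace ℝ (Fin n)) with hpCdef
    have hy : reflS (B ⊔ C) x = ((2:ℝ) • pB - x) + (2:ℝ) • pC := by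
      rw [reflS, h1]; module
    have hA2 : (Submodule.orthogonalProjectionOnto A (((2:ℝ) • pB - x) + (2:ℝ) • pC)
        : EuclideanSpace ℝ (Fin n))
        = (Submodule.orthogonalProjectionOnto A ((2:ℝ) • pB - x) : EuclideanSpace ℝ (Fin n)) := by
      have h0 : Submodule.orthogonalProjectionOnto A ((2:ℝ) • pC) = 0 :=
        Submodule.orthogonalProjectionOnto_apply_of_mem_orthogonal
          (Submodule.smul_mem _ _ (hCA (Submodule.orthogonalProjectionOnto C x).2))
      rw [map_add, h0, add_zero]
    have hC2 : (Submodule.orthogonalProjectionOnto C (((2:ℝ) • pB - x) + (2:ℝ) • pC)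
        : EuclideanSpace ℝ (Fin n)) = pC := by
      have hpB : Submodule.orthogonalProjectionOnto C pB = 0 :=
        Submodule.orthogonalProjectionOnto_apply_of_mem_orthogonal
          ((Submodule.isOrtho_iff_le.mpr hCB).symm.le (Submodule.orthogonalProjectionOnto B x).2)
      have hpC : (Submodule.orthogonalProjectionOnto C pC : EuclideanSpace ℝ (Fin n)) = pC :=
        Submodule.starProjection_eq_self_iff.mpr (Submodule.orthogonalProjectionOnto C x).2
      have hx : (Submodule.orthogonalProjectionOnto C (((2:ℝ) • pB - x) + (2:ℝ) • pC)
          : EuclideanSpace ℝ (Fin n))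
          = (2:ℝ) • (Submodule.orthogonalProjectionOnto C pB : EuclideanSpace ℝ (Fin n))
            - (Submodule.orthogonalProjectionOnto C x : EuclideanSpace ℝ (Fin n))
            + (2:ℝ) • (Submodule.orthogonalProjectionOnto C pC : EuclideanSpace ℝ (Fin n)) := by
        rw [map_add, map_sub, map_smul, map_smul]; rfl
      rw [hx, hpB, hpC, ← hpCdef]
      simp only [ZeroMemClass.coe_zero, smul_zero]
      module
    have lhs : reflS (A ⊔ C) (reflS (B ⊔ C) x)
        = (2:ℝ) • ((Submodule.orthogonalProjectionOnto A ((2:ℝ) • pB - x) : EuclideanSpace ℝ (Fin n)) + pC)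
          - (((2:ℝ) • pB - x) + (2:ℝ) • pC) := by
      rw [reflS, h2, hy, hA2, hC2]
    rw [lhs, reflS, reflS]
    module
  exact ⟨key, by rw [key]⟩
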